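/- For fixed h > 0 and T > 0, there exists k₀ such that for all k ≥ k₀, the NNWR contraction factor satisfies ρ(k) ≤ (2√6)^{2k} e^{-k²h²/T}, and hence ρ(k) < 1 for all sufficiently large k. -/
import Mathlib


theorem nnwr_contraction_eventual_bound (h T : ℝ) (hh : 0 < h) (hT : 0 < T) :
    (∃ k₀ : ℕ, ∀ k : ℕ, k₀ ≤ k →
      (Real.sqrt 6 / (1 - Real.exp (-((2 * k + 1) * h ^ 2) / T))) ^ (2 * k) *
          Real.exp (-((k : ℝ) ^ 2 * h ^ 2) / T)
        ≤ (2 * Real.sqrt 6) ^ (2 * k) * Real.exp (-((k : ℝ) ^ 2 * h ^ 2) / T)) ∧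
    (∃ k₁ : ℕ, ∀ k : ℕ, k₁ ≤ k →
      (Real.sqrt 6 / (1 - Real.exp (-((2 * k + 1) * h ^ 2) / T))) ^ (2 * k) *
          Real.exp (-((k : ℝ) ^ 2 * h ^ 2) / T) < 1) := by
  have hh2 : 0 < h ^ 2 := by positivity
  obtain ⟨k₀, hk₀⟩ := exists_nat_gt (T * Real.log 2 / h ^ 2)
  have key : ∀ k : ℕ, k₀ ≤ k →
      Real.exp (-((2 * (k : ℝ) + 1) * h ^ 2) / T) ≤ 1 / 2 := by
    intro k hk
    rw [show (1:ℝ)/2 = Real.exp (Real.log (1/2)) by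
      rw [Real.exp_log]; norm_num]
    rw [Real.exp_le_exp, Real.log_div one_ne_zero (by norm_num), Real.log_one]
    have hkk : T * Real.log 2 / h ^ 2 < (k:ℝ) :=
      lt_of_lt_of_le hk₀ (by exact_mod_cast hk)
    rw [div_lt_iff₀ hh2] at hkk
    rw [div_le_iff₀ hT]
    have hk0 : (0:ℝ) ≤ (k:ℝ) := Nat.cast_nonneg k
    nlinarith [hh2.le]
  have part1 : ∀ k : ℕ, k₀ ≤ k →
      (Real.sqrt 6 / (1 - Real.exp (-((2 * k + 1) * h ^ 2) / T))) ^ (2 * k) *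
          Real.exp (-((k : ℝ) ^ 2 * h ^ 2) / T)
        ≤ (2 * Real.sqrt 6) ^ (2 * k) * Real.exp (-((k : ℝ) ^ 2 * h ^ 2) / T) := by
    intro k hk
    have hD : (1:ℝ)/2 ≤ 1 - Real.exp (-((2 * (k:ℝ) + 1) * h ^ 2) / T) := by
      linarith [key k hk]
    have hDpos : (0:ℝ) < 1 - Real.exp (-((2 * (k:ℝ) + 1) * h ^ 2) / T) :=
      lt_of_lt_of_le one_half_pos hD
    have hbase : Real.sqrt 6 / (1 - Real.exp (-((2 * (k:ℝ) + 1) * h ^ 2) / T))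
        ≤ 2 * Real.sqrt 6 := by
      rw [div_le_iff₀ hDpos]
      nlinarith [Real.sqrt_nonneg 6]
    exact mul_le_mul_of_nonneg_right
      (pow_le_pow_left₀ (by positivity) hbase _) (Real.exp_nonneg _)
  refine ⟨⟨k₀, part1⟩, ?_⟩
  obtain ⟨m, hm⟩ := exists_nat_gt (T * Real.log 24 / h ^ 2)
  refine ⟨max k₀ (m + 1), fun k hk => ?_⟩
  have hk0 : k₀ ≤ k := le_trans (le_max_left _ _) hk
  have hkm : m + 1 ≤ k := le_trans (le_max_right _ _) hk
  refine lt_of_le_of_lt (part1 k hk0) ?_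
  have h24 : ((2 * Real.sqrt 6) ^ (2 * k) : ℝ) = 24 ^ k := by
    rw [pow_mul]
    congr 1
    have : Real.sqrt 6 ^ 2 = 6 := Real.sq_sqrt (by norm_num)
    nlinarith [this]
  have hexp : Real.exp (-((k : ℝ) ^ 2 * h ^ 2) / T)
      = Real.exp (-((k:ℝ) * h ^ 2) / T) ^ k := by
    have heq : (-((k:ℝ) ^ 2 * h ^ 2) / T) = (k:ℝ) * (-((k:ℝ) * h ^ 2) / T) := by
      ring
    rw [heq, Real.exp_nat_mul]
  rw [h24, hexp, ← mul_pow]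
  have hbase : 24 * Real.exp (-((k:ℝ) * h ^ 2) / T) < 1 := by
    have hkk : T * Real.log 24 / h ^ 2 < (k:ℝ) := by
      refine lt_of_lt_of_le hm ?_
      exact_mod_cast le_trans (Nat.le_succ m) hkm
    rw [div_lt_iff₀ hh2] at hkk
    have : Real.exp (-((k:ℝ) * h ^ 2) / T) < 1 / 24 := by
      rw [show (1:ℝ)/24 = Real.exp (Real.log (1/24)) by rw [Real.exp_log]; norm_num]
      rw [Real.exp_lt_exp, Real.log_div one_ne_zero (by norm_num), Real.log_one,
        div_lt_iff₀ hT]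
      nlinarith
    linarith
  have hkpos : k ≠ 0 := by omega
  calc (24 * Real.exp (-((k:ℝ) * h ^ 2) / T)) ^ k < 1 ^ k :=
        pow_lt_pow_left₀ hbase (by positivity) hkpos
    _ = 1 := one_pow k
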